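/- Fix a natural number r and a real δ > 0, and let d be a natural number with d ≥ √(2·r·ln(2/δ)). For 0 ≤ i ≤ r with i ≡ r (mod 2) set α_i^{(r)} = binom(r, (r−i)/2)/2^r, and set α_i^{(r)} = 0 for all other i. Define the polynomial p_{r,d}(x) = α_0^{(r)} + Σ_{i=1}^{d} 2·α_i^{(r)}·T_i(x), where T_i is the i-th Chebyshev polynomial of the first kind. Then |p_{r,d}(x) − x^r| ≤ δ for all x ∈ [−1,1]. -/

import Mathlib

open Polynomial

/-- The Chebyshev coefficients of `x^r`: `α_i^{(r)} = binom(r, (r-i)/2) / 2^r` when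
`0 ≤ i ≤ r` and `i ≡ r (mod 2)`, and `α_i^{(r)} = 0` otherwise. -/
noncomputable def chebCoeffAlpha (r i : ℕ) : ℝ :=
  if i ≤ r ∧ i % 2 = r % 2 then (r.choose ((r - i) / 2) : ℝ) / 2 ^ r else 0

/-- The degree-`d` Chebyshev truncation of `x^r`:
`p_{r,d}(x) = α_0^{(r)} + Σ_{i=1}^d 2 α_i^{(r)} T_i(x)`. -/
noncomputable def chebApprox (r d : ℕ) : Polynomial ℝ :=
  Polynomial.C (chebCoeffAlpha r 0) +
    ∑ i ∈ Finset.Icc 1 d, Polynomial.C (2 * chebCoeffAlpha r i) * Polynomial.Chebyshev.T ℝ i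

lemma alpha_nonneg (r i : ℕ) : 0 ≤ chebCoeffAlpha r i := by
  unfold chebCoeffAlpha; split <;> positivity

lemma alpha_eq_zero (r i : ℕ) (h : r < i) : chebCoeffAlpha r i = 0 := by
  unfold chebCoeffAlpha; rw [if_neg]; omega

/-- Binomial expansion of `cos θ ^ r`. -/
lemma cos_binom (r : ℕ) (θ : ℝ) :
    (Real.cos θ) ^ r =
      ∑ k ∈ Finset.range (r + 1), (r.choose k : ℝ) / 2 ^ r * Real.cos (((r : ℝ) - 2 * k) * θ) := by
  have key : (((2 * Real.cos θ) ^ r : ℝ) : ℂ)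
      = ∑ k ∈ Finset.range (r + 1),
          (r.choose k : ℂ) * Complex.exp (((((r : ℝ) - 2 * k) * θ : ℝ)) * Complex.I) := by
    push_cast [Complex.ofReal_cos]
    rw [Complex.two_cos, add_comm, add_pow]
    refine Finset.sum_congr rfl fun k hk => ?_
    have hk' : k ≤ r := Nat.lt_succ_iff.mp (Finset.mem_range.mp hk)
    rw [← Complex.exp_nat_mul, ← Complex.exp_nat_mul, ← Complex.exp_add]
    rw [mul_comm _ (r.choose k : ℂ), mul_assoc]
    congr 2
    push_cast [hk']
    ring
  have := congrArg Complex.re key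
  rw [Complex.ofReal_re, Complex.re_sum] at this
  rw [mul_pow] at this
  have h2 : (0:ℝ) < 2 ^ r := by positivity
  calc Real.cos θ ^ r = 2 ^ r * Real.cos θ ^ r / 2 ^ r := by field_simp
    _ = _ := by
        rw [this]
        rw [Finset.sum_div]
        refine Finset.sum_congr rfl fun k hk => ?_
        have : ((r.choose k : ℂ) * Complex.exp (((((r : ℝ) - 2 * k) * θ : ℝ)) * Complex.I)).re
            = (r.choose k : ℝ) * Real.cos (((r : ℝ) - 2 * k) * θ) := by
          rw [show (r.choose k : ℂ) = ((r.choose k : ℝ) : ℂ) by push_cast; ring,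
            Complex.re_ofReal_mul, Complex.exp_ofReal_mul_I_re]
        rw [this, div_mul_eq_mul_div]

/-- Grouping of the binomial sum into Chebyshev-coefficient form, for even `f`. -/
lemma group_sum (r : ℕ) (f : ℤ → ℝ) (hf : ∀ n, f (-n) = f n) :
    ∑ k ∈ Finset.range (r + 1), (r.choose k : ℝ) / 2 ^ r * f ((r : ℤ) - 2 * k) =
      chebCoeffAlpha r 0 * f 0 + ∑ i ∈ Finset.Icc 1 r, 2 * chebCoeffAlpha r i * f (i : ℤ) := by
  have hmap : ∀ k ∈ Finset.range (r + 1), ((r : ℤ) - 2 * k).natAbs ∈ Finset.range (r + 1) := by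
    intro k hk; simp only [Finset.mem_range] at hk ⊢; omega
  set F : ℕ → ℝ := fun i => ∑ k ∈ (Finset.range (r + 1)).filter
      (fun k : ℕ => ((r : ℤ) - 2 * (k : ℤ)).natAbs = i), (r.choose k : ℝ) / 2 ^ r * f ((r : ℤ) - 2 * k)
    with hF
  have h1 : ∑ i ∈ Finset.range (r + 1), F i
      = ∑ k ∈ Finset.range (r + 1), (r.choose k : ℝ) / 2 ^ r * f ((r : ℤ) - 2 * k) :=
    Finset.sum_fiberwise_of_maps_to hmap _
  rw [← h1, show Finset.range (r + 1) = insert 0 (Finset.Icc 1 r) by ext k; simp; omega,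
    Finset.sum_insert (by simp)]
  congr 1
  · by_cases he : r % 2 = 0
    · have hset : (Finset.range (r + 1)).filter (fun k : ℕ => ((r : ℤ) - 2 * (k : ℤ)).natAbs = 0)
          = {r / 2} := by
        ext k; simp only [Finset.mem_filter, Finset.mem_range, Finset.mem_singleton]; omega
      rw [hF]; simp only [hset, Finset.sum_singleton]
      rw [show ((r : ℤ) - 2 * ((r / 2 : ℕ) : ℤ)) = 0 by omega]
      unfold chebCoeffAlpha
      rw [if_pos ⟨Nat.zero_le r, by omega⟩]
      norm_num
    · have hset : (Finset.range (r + 1)).filter (fun k : ℕ => ((r : ℤ) - 2 * (k : ℤ)).natAbs = 0)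
          = ∅ := by
        ext k; simp only [Finset.mem_filter, Finset.mem_range, Finset.notMem_empty, iff_false,
          not_and]; omega
      rw [hF]; simp only [hset, Finset.sum_empty]
      unfold chebCoeffAlpha
      rw [if_neg (by omega)]
      simp
  · refine Finset.sum_congr rfl fun i hi => ?_
    obtain ⟨hi1, hi2⟩ := Finset.mem_Icc.mp hi
    by_cases hp : i % 2 = r % 2
    · have hset : (Finset.range (r + 1)).filter (fun k : ℕ => ((r : ℤ) - 2 * (k : ℤ)).natAbs = i)
          = {(r - i) / 2, (r + i) / 2} := by
        ext k; simp only [Finset.mem_filter, Finset.mem_range, Finset.mem_insert,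
          Finset.mem_singleton]; omega
      have hne : (r - i) / 2 ≠ (r + i) / 2 := by omega
      rw [hF]; simp only [hset]
      rw [Finset.sum_pair hne]
      rw [show ((r : ℤ) - 2 * (((r - i) / 2 : ℕ) : ℤ)) = (i : ℤ) by omega,
        show ((r : ℤ) - 2 * (((r + i) / 2 : ℕ) : ℤ)) = -(i : ℤ) by omega, hf,
        show r.choose ((r + i) / 2) = r.choose ((r - i) / 2) by
          rw [show (r + i) / 2 = r - (r - i) / 2 by omega]
          exact Nat.choose_symm (by omega)]
      unfold chebCoeffAlpha
      rw [if_pos ⟨hi2, hp⟩]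
      ring
    · have hset : (Finset.range (r + 1)).filter (fun k : ℕ => ((r : ℤ) - 2 * (k : ℤ)).natAbs = i)
          = ∅ := by
        ext k; simp only [Finset.mem_filter, Finset.mem_range, Finset.notMem_empty, iff_false,
          not_and]; omega
      rw [hF]; simp only [hset, Finset.sum_empty]
      unfold chebCoeffAlpha
      rw [if_neg (by tauto)]
      simp

/-- The full Chebyshev expansion of `cos θ ^ r`. -/
lemma cheb_identity (r N : ℕ) (hN : r ≤ N) (θ : ℝ) :
    chebCoeffAlpha r 0 + ∑ i ∈ Finset.Icc 1 N, 2 * chebCoeffAlpha r i * Real.cos (i * θ) =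
      (Real.cos θ) ^ r := by
  have hsub : ∑ i ∈ Finset.Icc 1 r, 2 * chebCoeffAlpha r i * Real.cos (i * θ)
      = ∑ i ∈ Finset.Icc 1 N, 2 * chebCoeffAlpha r i * Real.cos (i * θ) := by
    refine Finset.sum_subset (Finset.Icc_subset_Icc_right hN) fun i hiN hir => ?_
    rw [alpha_eq_zero r i (by simp only [Finset.mem_Icc] at hiN hir; omega)]
    ring
  rw [← hsub, cos_binom r θ]
  have := group_sum r (fun n : ℤ => Real.cos ((n : ℝ) * θ)) (fun n => by
    push_cast
    rw [neg_mul, Real.cos_neg])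
  simp only [Int.cast_zero, zero_mul, Real.cos_zero, mul_one, Int.cast_natCast] at this
  rw [← this]
  refine Finset.sum_congr rfl fun k hk => ?_
  norm_num

lemma binom_exp (r : ℕ) (s : ℝ) :
    ∑ k ∈ Finset.range (r + 1), (r.choose k : ℝ) / 2 ^ r * Real.exp (s * ((r : ℝ) - 2 * k))
      = Real.cosh s ^ r := by
  rw [Real.cosh_eq, div_pow,
    show Real.exp s + Real.exp (-s) = Real.exp (-s) + Real.exp s from add_comm _ _,
    add_pow, Finset.sum_div]
  refine Finset.sum_congr rfl fun k hk => ?_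
  have hk' : k ≤ r := Nat.lt_succ_iff.mp (Finset.mem_range.mp hk)
  rw [← Real.exp_nat_mul, ← Real.exp_nat_mul, ← Real.exp_add]
  rw [div_mul_eq_mul_div, mul_comm _ ((r.choose k : ℝ))]
  congr 2
  push_cast [hk']
  ring

/-- Moment generating function bound. -/
lemma mgf_bound (r : ℕ) (lam : ℝ) :
    chebCoeffAlpha r 0 + ∑ i ∈ Finset.Icc 1 r, 2 * chebCoeffAlpha r i * Real.exp (lam * i) ≤
      2 * Real.cosh lam ^ r := by
  have := group_sum r (fun n : ℤ => Real.exp (lam * |(n : ℝ)|)) (fun n => by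
    push_cast
    rw [abs_neg])
  simp only [Int.cast_zero, abs_zero, mul_zero, Real.exp_zero, mul_one, Int.cast_natCast] at this
  have habs : ∀ i : ℕ, Real.exp (lam * |(i : ℝ)|) = Real.exp (lam * i) := by
    intro i; rw [abs_of_nonneg (by positivity)]
  simp only [habs] at this
  rw [← this]
  have hle : ∑ k ∈ Finset.range (r + 1), (r.choose k : ℝ) / 2 ^ r
        * Real.exp (lam * |((((r : ℤ) - 2 * k : ℤ)) : ℝ)|)
      ≤ ∑ k ∈ Finset.range (r + 1), ((r.choose k : ℝ) / 2 ^ r * Real.exp (lam * ((r : ℝ) - 2 * k))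
        + (r.choose k : ℝ) / 2 ^ r * Real.exp ((-lam) * ((r : ℝ) - 2 * k))) := by
    refine Finset.sum_le_sum fun k hk => ?_
    have hc : (0:ℝ) ≤ (r.choose k : ℝ) / 2 ^ r := by positivity
    rw [show ((((r : ℤ) - 2 * k : ℤ) : ℝ)) = (r : ℝ) - 2 * k by push_cast; ring]
    rcases abs_choice ((r : ℝ) - 2 * k) with h | h <;> rw [h]
    · nlinarith [Real.exp_pos (lam * ((r:ℝ) - 2*k)), Real.exp_pos ((-lam) * ((r:ℝ) - 2*k))]
    · rw [show lam * -((r:ℝ) - 2*k) = -lam * ((r:ℝ) - 2*k) by ring]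
      nlinarith [Real.exp_pos (lam * ((r:ℝ) - 2*k)), Real.exp_pos ((-lam) * ((r:ℝ) - 2*k))]
  calc _ ≤ _ := hle
    _ = Real.cosh lam ^ r + Real.cosh (-lam) ^ r := by
        rw [Finset.sum_add_distrib, binom_exp, binom_exp]
    _ = 2 * Real.cosh lam ^ r := by rw [Real.cosh_neg]; ring

/-- Tail bound on the Chebyshev coefficients. -/
lemma tail_bound (r : ℕ) (δ : ℝ) (hδ : 0 < δ) (d M : ℕ)
    (hd : Real.sqrt (2 * r * Real.log (2 / δ)) ≤ (d : ℝ)) :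
    ∑ i ∈ Finset.Ioc d M, 2 * chebCoeffAlpha r i ≤ δ := by
  by_cases hdr : r ≤ d
  · have hz : ∀ i ∈ Finset.Ioc d M, 2 * chebCoeffAlpha r i = 0 := fun i hi => by
      rw [alpha_eq_zero r i (by simp only [Finset.mem_Ioc] at hi; omega)]; ring
    rw [Finset.sum_congr rfl hz, Finset.sum_const, smul_zero]
    linarith
  push_neg at hdr
  have hr1 : 1 ≤ r := by omega
  have hrR : (0:ℝ) < r := by exact_mod_cast hr1
  set lam : ℝ := d / r with hlam
  have hlam0 : 0 ≤ lam := by positivity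
  have step1 : ∑ i ∈ Finset.Ioc d M, 2 * chebCoeffAlpha r i
      ≤ Real.exp (-(lam * (d + 1))) * (chebCoeffAlpha r 0
          + ∑ i ∈ Finset.Icc 1 r, 2 * chebCoeffAlpha r i * Real.exp (lam * i)) := by
    have e1 : ∑ i ∈ Finset.Ioc d M, 2 * chebCoeffAlpha r i
        ≤ ∑ i ∈ Finset.Ioc d M,
            Real.exp (-(lam * (d + 1))) * (2 * chebCoeffAlpha r i * Real.exp (lam * i)) := by
      refine Finset.sum_le_sum fun i hi => ?_
      have hi1 : d + 1 ≤ i := (Finset.mem_Ioc.mp hi).1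
      have ha := alpha_nonneg r i
      have h1 : (1:ℝ) ≤ Real.exp (-(lam * (d + 1))) * Real.exp (lam * i) := by
        rw [← Real.exp_add]
        refine Real.one_le_exp ?_
        have : ((d:ℝ) + 1) ≤ i := by exact_mod_cast hi1
        nlinarith
      nlinarith
    refine e1.trans ?_
    rw [← Finset.mul_sum]
    refine mul_le_mul_of_nonneg_left ?_ (Real.exp_nonneg _)
    have h2 := Finset.sum_filter_of_ne (s := Finset.Ioc d M) (p := fun i => i ≤ r)
        (f := fun i => 2 * chebCoeffAlpha r i * Real.exp (lam * i)) (fun x hx hne => by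
          by_contra h
          push_neg at h
          rw [alpha_eq_zero r x (by omega)] at hne
          simp at hne)
    rw [← h2]
    have hsub : (Finset.Ioc d M).filter (fun i => i ≤ r) ⊆ Finset.Icc 1 r := by
      intro i hi
      simp only [Finset.mem_filter, Finset.mem_Ioc, Finset.mem_Icc] at hi ⊢
      omega
    have h3 : ∑ i ∈ (Finset.Ioc d M).filter (fun i => i ≤ r),
          2 * chebCoeffAlpha r i * Real.exp (lam * i)
        ≤ ∑ i ∈ Finset.Icc 1 r, 2 * chebCoeffAlpha r i * Real.exp (lam * i) := by
      refine Finset.sum_le_sum_of_subset_of_nonneg hsub fun i _ _ => ?_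
      exact mul_nonneg (mul_nonneg (by norm_num) (alpha_nonneg r i)) (Real.exp_nonneg _)
    refine h3.trans ?_
    nlinarith [alpha_nonneg r 0]
  have step2 : Real.exp (-(lam * (d + 1))) * (chebCoeffAlpha r 0
        + ∑ i ∈ Finset.Icc 1 r, 2 * chebCoeffAlpha r i * Real.exp (lam * i))
      ≤ Real.exp (-(lam * (d + 1))) * (2 * Real.exp ((r : ℝ) * (lam ^ 2 / 2))) := by
    refine mul_le_mul_of_nonneg_left ((mgf_bound r lam).trans ?_) (Real.exp_nonneg _)
    have h4 : Real.cosh lam ^ r ≤ Real.exp (lam ^ 2 / 2) ^ r :=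
      pow_le_pow_left₀ (Real.cosh_pos _).le (Real.cosh_le_exp_half_sq lam) r
    rw [← Real.exp_nat_mul] at h4
    linarith
  have hE : -(lam * (d + 1)) + (r : ℝ) * (lam ^ 2 / 2) ≤ -((d:ℝ) ^ 2 / (2 * r)) := by
    have hd0 : (0:ℝ) ≤ d := Nat.cast_nonneg d
    have heq : -(lam * ((d:ℝ) + 1)) + (r : ℝ) * (lam ^ 2 / 2)
        = -((d:ℝ) ^ 2 / (2 * r)) - (d:ℝ) / r * 1 - (d:ℝ)^2/(2*(r:ℝ)^2) * 0 := by
      rw [hlam]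
      field_simp
      ring
    rw [heq]
    have : (0:ℝ) ≤ (d:ℝ) / r := by positivity
    linarith
  have step3 : Real.exp (-(lam * (d + 1))) * (2 * Real.exp ((r : ℝ) * (lam ^ 2 / 2)))
      ≤ 2 * Real.exp (-((d:ℝ) ^ 2 / (2 * r))) := by
    rw [show Real.exp (-(lam * (d + 1))) * (2 * Real.exp ((r : ℝ) * (lam ^ 2 / 2)))
        = 2 * Real.exp (-(lam * (d + 1)) + (r : ℝ) * (lam ^ 2 / 2)) by rw [Real.exp_add]; ring]
    have := Real.exp_le_exp.mpr hE
    linarith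
  have final : 2 * Real.exp (-((d:ℝ) ^ 2 / (2 * r))) ≤ δ := by
    by_cases hlog : Real.log (2 / δ) ≤ 0
    · have h2δ : 2 / δ ≤ 1 := by
        by_contra h
        push_neg at h
        have := Real.log_pos h
        linarith
      have hδ2 : 2 ≤ δ := by
        rw [div_le_one hδ] at h2δ
        exact h2δ
      have : Real.exp (-((d:ℝ) ^ 2 / (2 * r))) ≤ 1 := by
        rw [← Real.exp_zero]
        exact Real.exp_le_exp.mpr (neg_nonpos.mpr (by positivity))
      linarith
    · push_neg at hlog
      have hsq : 2 * (r : ℝ) * Real.log (2 / δ) ≤ (d : ℝ) ^ 2 := by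
        have h1 : Real.sqrt (2 * r * Real.log (2 / δ)) ^ 2 ≤ (d : ℝ) ^ 2 :=
          pow_le_pow_left₀ (Real.sqrt_nonneg _) hd 2
        rwa [Real.sq_sqrt (by positivity)] at h1
      have hlogle : Real.log (2 / δ) ≤ (d : ℝ) ^ 2 / (2 * r) := by
        rw [le_div_iff₀ (by positivity)]
        nlinarith
      have : Real.exp (-((d:ℝ) ^ 2 / (2 * r))) ≤ δ / 2 := by
        have h5 : -((d:ℝ) ^ 2 / (2 * r)) ≤ Real.log (δ / 2) := by
          rw [show Real.log (δ / 2) = -Real.log (2 / δ) by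
            rw [← Real.log_inv]
            congr 1
            field_simp]
          linarith
        calc Real.exp (-((d:ℝ) ^ 2 / (2 * r))) ≤ Real.exp (Real.log (δ / 2)) :=
              Real.exp_le_exp.mpr h5
          _ = δ / 2 := Real.exp_log (by positivity)
      linarith
  exact step1.trans (step2.trans (step3.trans final))

/-- For `δ > 0` and `d ≥ √(2 r ln(2/δ))`, the polynomial `p_{r,d}` satisfies
`|p_{r,d}(x) - x^r| ≤ δ` for all `x ∈ [-1,1]`. -/
theorem chebApprox_close_to_monomial
    (r : ℕ) (δ : ℝ) (hδ : 0 < δ) (d : ℕ)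
    (hd : Real.sqrt (2 * r * Real.log (2 / δ)) ≤ (d : ℝ)) :
    ∀ x ∈ Set.Icc (-1 : ℝ) 1, |(chebApprox r d).eval x - x ^ r| ≤ δ := by
  intro x hx
  obtain ⟨hx1, hx2⟩ := hx
  set θ := Real.arccos x with hθ
  have hcos : Real.cos θ = x := Real.cos_arccos hx1 hx2
  set M := max d r with hM
  have evalp : ∀ N : ℕ, (chebApprox r N).eval x
      = chebCoeffAlpha r 0 + ∑ i ∈ Finset.Icc 1 N, 2 * chebCoeffAlpha r i * Real.cos (i * θ) := by
    intro N
    unfold chebApprox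
    rw [Polynomial.eval_add, Polynomial.eval_C, Polynomial.eval_finset_sum]
    congr 1
    refine Finset.sum_congr rfl fun i hi => ?_
    rw [Polynomial.eval_mul, Polynomial.eval_C, ← hcos, Polynomial.Chebyshev.T_real_cos]
    norm_num
  have hidM : (chebApprox r M).eval x = x ^ r := by
    rw [evalp M, cheb_identity r M (le_max_right d r) θ, hcos]
  have hdiff : (chebApprox r d).eval x - x ^ r
      = -∑ i ∈ Finset.Ioc d M, 2 * chebCoeffAlpha r i * Real.cos (i * θ) := by
    rw [← hidM, evalp M, evalp d]
    rw [show Finset.Icc 1 M = Finset.Ioc 0 M by rw [← Finset.Icc_add_one_left_eq_Ioc]; rfl,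
      show Finset.Icc 1 d = Finset.Ioc 0 d by rw [← Finset.Icc_add_one_left_eq_Ioc]; rfl,
      ← Finset.sum_Ioc_consecutive _ (Nat.zero_le d) (le_max_left d r)]
    ring
  rw [hdiff, abs_neg]
  calc |∑ i ∈ Finset.Ioc d M, 2 * chebCoeffAlpha r i * Real.cos (i * θ)|
      ≤ ∑ i ∈ Finset.Ioc d M, |2 * chebCoeffAlpha r i * Real.cos (i * θ)| :=
        Finset.abs_sum_le_sum_abs _ _
    _ ≤ ∑ i ∈ Finset.Ioc d M, 2 * chebCoeffAlpha r i := by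
        refine Finset.sum_le_sum fun i hi => ?_
        rw [abs_mul, abs_of_nonneg (by nlinarith [alpha_nonneg r i])]
        nlinarith [alpha_nonneg r i, Real.abs_cos_le_one ((i : ℝ) * θ), abs_nonneg (Real.cos ((i:ℝ) * θ))]
    _ ≤ δ := tail_bound r δ hδ d M hd
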